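/- Let n ≥ 1. With weight ρ(z, z̄) = (2 / ((2n)^{1/(2n)} π Γ(1/(2n)))) (z z̄)^{n - 1/2} K_{1 - 1/(2n)}((z z̄)^n / n) on ℂ, the monomials z^{2nk} satisfy ∫_ℂ |z^{2nk}|^2 ρ(z, z̄) dA(z) = (2n)^{2k} Γ(k + 1/(2n)) k! / Γ(1/(2n)) for every k ≥ 0. -/

import Mathlib

open Real MeasureTheory Complex

/-- The modified Bessel function of the second kind, via its integral representation. -/
noncomputable def besselK (ν : ℝ) (x : ℝ) : ℝ :=
  ∫ t in Set.Ioi (0 : ℝ), Real.exp (-x * Real.cosh t) * Real.cosh (ν * t)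

open Set

lemma real_beta_eqOn {p q : ℝ} :
    Set.EqOn (fun x : ℝ => x ^ (p - 1) * (1 - x) ^ (q - 1))
      (fun x : ℝ => ((x : ℂ) ^ ((p : ℂ) - 1) * (1 - (x : ℂ)) ^ ((q : ℂ) - 1)).re)
      (Set.Ioc 0 1) := by
  intro x hx
  have hx0 : (0 : ℝ) ≤ x := le_of_lt hx.1
  have hx1 : (0 : ℝ) ≤ 1 - x := by linarith [hx.2]
  simp only
  rw [show ((p : ℂ) - 1) = ((p - 1 : ℝ) : ℂ) by push_cast; ring,
    show ((q : ℂ) - 1) = ((q - 1 : ℝ) : ℂ) by push_cast; ring,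
    show (1 - (x : ℂ)) = ((1 - x : ℝ) : ℂ) by push_cast; ring,
    ← Complex.ofReal_cpow hx0, ← Complex.ofReal_cpow hx1, ← Complex.ofReal_mul,
    Complex.ofReal_re]

lemma real_beta_integrableOn {p q : ℝ} (hp : 0 < p) (hq : 0 < q) :
    IntegrableOn (fun x : ℝ => x ^ (p - 1) * (1 - x) ^ (q - 1)) (Set.Ioc 0 1) := by
  have hc : IntegrableOn
      (fun x : ℝ => (x : ℂ) ^ ((p : ℂ) - 1) * (1 - (x : ℂ)) ^ ((q : ℂ) - 1)) (Set.Ioc 0 1) := by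
    have := Complex.betaIntegral_convergent (u := p) (v := q) (by simpa) (by simpa)
    rwa [intervalIntegrable_iff_integrableOn_Ioc_of_le zero_le_one] at this
  refine IntegrableOn.congr_fun hc.re (fun x hx => ?_) measurableSet_Ioc
  simpa [RCLike.re_to_complex] using (real_beta_eqOn hx).symm

lemma real_beta_eq {p q : ℝ} (hp : 0 < p) (hq : 0 < q) :
    ∫ x in Set.Ioo (0 : ℝ) 1, x ^ (p - 1) * (1 - x) ^ (q - 1)
      = Real.Gamma p * Real.Gamma q / Real.Gamma (p + q) := by
  have hΓ : Complex.Gamma ((p : ℂ) + q) ≠ 0 := by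
    rw [show ((p : ℂ) + q) = ((p + q : ℝ) : ℂ) by push_cast; ring, Complex.Gamma_ofReal]
    exact_mod_cast (Real.Gamma_pos_of_pos (by linarith)).ne'
  have hc := Complex.Gamma_mul_Gamma_eq_betaIntegral (s := p) (t := q) (by simpa) (by simpa)
  have hbeta : Complex.betaIntegral p q
      = ((Real.Gamma p * Real.Gamma q / Real.Gamma (p + q) : ℝ) : ℂ) := by
    have h2 : Complex.betaIntegral p q
        = Complex.Gamma p * Complex.Gamma q / Complex.Gamma ((p : ℂ) + q) := by
      field_simp
      linear_combination -hc
    rw [h2, show ((p : ℂ) + q) = ((p + q : ℝ) : ℂ) by push_cast; ring,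
      Complex.Gamma_ofReal, Complex.Gamma_ofReal, Complex.Gamma_ofReal]
    push_cast
    ring
  have hint : IntegrableOn
      (fun x : ℝ => (x : ℂ) ^ ((p : ℂ) - 1) * (1 - (x : ℂ)) ^ ((q : ℂ) - 1)) (Set.Ioc 0 1) := by
    have := Complex.betaIntegral_convergent (u := p) (v := q) (by simpa) (by simpa)
    rwa [intervalIntegrable_iff_integrableOn_Ioc_of_le zero_le_one] at this
  calc ∫ x in Set.Ioo (0 : ℝ) 1, x ^ (p - 1) * (1 - x) ^ (q - 1)
      = ∫ x in Set.Ioc (0 : ℝ) 1, x ^ (p - 1) * (1 - x) ^ (q - 1) :=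
        (integral_Ioc_eq_integral_Ioo).symm
    _ = ∫ x in Set.Ioc (0 : ℝ) 1,
          ((x : ℂ) ^ ((p : ℂ) - 1) * (1 - (x : ℂ)) ^ ((q : ℂ) - 1)).re :=
        setIntegral_congr_fun measurableSet_Ioc real_beta_eqOn
    _ = (∫ x in Set.Ioc (0 : ℝ) 1,
          (x : ℂ) ^ ((p : ℂ) - 1) * (1 - (x : ℂ)) ^ ((q : ℂ) - 1)).re :=
        by
          have h := integral_re hint
          simp only [RCLike.re_to_complex] at h
          exact h
    _ = (Complex.betaIntegral p q).re := by
        rw [Complex.betaIntegral, intervalIntegral.integral_of_le zero_le_one]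
    _ = Real.Gamma p * Real.Gamma q / Real.Gamma (p + q) := by rw [hbeta, Complex.ofReal_re]

/-- Substitution `x = y/(1-y)` : `∫_{(0,1)} x^{p-1}(1+x)^{-(p+q)} dx
    = ∫_{(0,1/2)} y^{p-1}(1-y)^{q-1} dy`. -/
lemma sub_frac (p q : ℝ) :
    ∫ x in Ioo (0:ℝ) 1, x ^ (p-1) * (1+x) ^ (-(p+q))
      = ∫ y in Ioo (0:ℝ) (1/2), y ^ (p-1) * (1-y) ^ (q-1) := by
  have himg : (fun y : ℝ => y / (1-y)) '' Ioo (0:ℝ) (1/2) = Ioo (0:ℝ) 1 := by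
    ext x
    constructor
    · rintro ⟨y, hy, rfl⟩
      obtain ⟨hy0, hy2⟩ := hy
      have h1 : 0 < 1 - y := by linarith
      exact ⟨div_pos hy0 h1, by rw [div_lt_one h1]; linarith⟩
    · intro hx
      obtain ⟨hx0, hx1⟩ := hx
      have h1 : (0:ℝ) < 1 + x := by linarith
      refine ⟨x / (1+x), ⟨div_pos hx0 h1, ?_⟩, ?_⟩
      · rw [div_lt_iff₀ h1]; linarith
      · field_simp; ring
  have hderiv : ∀ y ∈ Ioo (0:ℝ) (1/2), HasDerivWithinAt (fun y : ℝ => y / (1-y))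
      (((1-y)^2)⁻¹) (Ioo (0:ℝ) (1/2)) y := by
    intro y hy
    have h1 : 1 - y ≠ 0 := by intro h; have := hy.2; norm_num at h ⊢; linarith
    have h := ((hasDerivAt_id y).div ((hasDerivAt_id y).const_sub 1) h1).hasDerivWithinAt
      (s := Ioo (0:ℝ) (1/2))
    convert h using 1
    · rfl
    · rfl
    · rfl
    · simp only [id_eq]
      field_simp
      ring
  have hinj : InjOn (fun y : ℝ => y / (1-y)) (Ioo (0:ℝ) (1/2)) := by
    intro a ha b hb h
    have h1 : 1 - a ≠ 0 := by have := ha.2; intro hc; norm_num at hc ⊢; linarith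
    have h2 : 1 - b ≠ 0 := by have := hb.2; intro hc; norm_num at hc ⊢; linarith
    field_simp at h
    linarith
  rw [← himg, integral_image_eq_integral_abs_deriv_smul measurableSet_Ioo hderiv hinj]
  refine setIntegral_congr_fun measurableSet_Ioo fun y hy => ?_
  have hy0 : 0 < y := hy.1
  have h1 : 0 < 1 - y := by linarith [hy.2]
  have e1 : (1 + y / (1-y)) = (1-y)⁻¹ := by field_simp; ring
  have e2 : (y / (1-y)) ^ (p-1) = y ^ (p-1) * ((1-y) ^ (p-1))⁻¹ := by
    rw [Real.div_rpow hy0.le h1.le, div_eq_mul_inv]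
  have e3 : ((1-y)⁻¹) ^ (-(p+q)) = (1-y) ^ (p+q) := by
    rw [Real.inv_rpow h1.le, ← Real.rpow_neg h1.le, neg_neg]
  have e4 : |((1-y)^2)⁻¹| = ((1-y) ^ ((2:ℝ)))⁻¹ := by
    rw [abs_of_pos (by positivity), Real.rpow_two]
  simp only [smul_eq_mul, e1, e2, e3, e4]
  rw [show p + q = (q-1) + ((p-1) + (2:ℝ)) by ring, Real.rpow_add h1, Real.rpow_add h1]
  field_simp

/-- Reflection `y ↦ 1-y` on (1/2,1). -/
lemma sub_reflect (h : ℝ → ℝ) :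
    ∫ y in Ioo (0:ℝ) (1/2), h y = ∫ y in Ioo (1/2:ℝ) 1, h (1-y) := by
  have himg : (fun y : ℝ => 1 - y) '' Ioo (1/2:ℝ) 1 = Ioo (0:ℝ) (1/2) := by
    ext x
    simp only [mem_image, mem_Ioo]
    constructor
    · rintro ⟨y, ⟨hy1, hy2⟩, rfl⟩
      constructor <;> linarith
    · rintro ⟨hx1, hx2⟩
      exact ⟨1 - x, ⟨by linarith, by linarith⟩, by ring⟩
  have hderiv : ∀ y ∈ Ioo (1/2:ℝ) 1, HasDerivWithinAt (fun y : ℝ => 1 - y)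
      (-1) (Ioo (1/2:ℝ) 1) y := fun y _ =>
    ((hasDerivAt_id y).const_sub 1).hasDerivWithinAt
  have hinj : InjOn (fun y : ℝ => 1 - y) (Ioo (1/2:ℝ) 1) := fun a _ b _ hab => by
    dsimp at hab; linarith
  rw [← himg, integral_image_eq_integral_abs_deriv_smul measurableSet_Ioo hderiv hinj]
  refine setIntegral_congr_fun measurableSet_Ioo fun y _ => ?_
  norm_num

lemma integrableOn_rpow_one_add_rpow {a s : ℝ} (ha : 0 < a) (hs : 0 ≤ s) :
    IntegrableOn (fun x : ℝ => x ^ (a-1) * (1+x) ^ (-s)) (Ioo (0:ℝ) 1) := by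
  have base : IntegrableOn (fun x : ℝ => x ^ (a-1)) (Ioo (0:ℝ) 1) := by
    have := intervalIntegral.intervalIntegrable_rpow' (a := 0) (b := 1) (r := a - 1) (by linarith)
    rw [intervalIntegrable_iff_integrableOn_Ioc_of_le zero_le_one] at this
    exact this.mono_set Ioo_subset_Ioc_self
  refine base.mono' ?_ ?_
  · exact Measurable.aestronglyMeasurable (by fun_prop)
  · rw [ae_restrict_iff' measurableSet_Ioo]
    refine Filter.Eventually.of_forall fun x hx => ?_
    obtain ⟨hx0, hx1⟩ := hx
    have h1 : (0:ℝ) ≤ x ^ (a-1) := Real.rpow_nonneg hx0.le _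
    have h2 : (0:ℝ) ≤ (1+x) ^ (-s) := Real.rpow_nonneg (by linarith) _
    simp only [Real.norm_eq_abs, _root_.abs_of_nonneg (mul_nonneg h1 h2),
      _root_.abs_of_nonneg h1]
    calc x ^ (a-1) * (1+x) ^ (-s) ≤ x ^ (a-1) * 1 := by
          refine mul_le_mul_of_nonneg_left ?_ h1
          exact Real.rpow_le_one_of_one_le_of_nonpos (by linarith) (by linarith)
      _ = x ^ (a-1) := mul_one _

/-- The half Beta integrals recombine. -/
lemma beta_halves {p q : ℝ} (hp : 0 < p) (hq : 0 < q) :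
    (∫ y in Ioo (0:ℝ) (1/2), y ^ (p-1) * (1-y) ^ (q-1))
      + ∫ y in Ioo (0:ℝ) (1/2), y ^ (q-1) * (1-y) ^ (p-1)
      = Real.Gamma p * Real.Gamma q / Real.Gamma (p + q) := by
  have h2 : (∫ y in Ioo (0:ℝ) (1/2), y ^ (q-1) * (1-y) ^ (p-1))
      = ∫ y in Ioo (1/2:ℝ) 1, y ^ (p-1) * (1-y) ^ (q-1) := by
    rw [sub_reflect (fun y => y ^ (q-1) * (1-y) ^ (p-1))]
    refine setIntegral_congr_fun measurableSet_Ioo fun y _ => ?_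
    norm_num [mul_comm]
  rw [h2]
  have hIoo : IntegrableOn (fun y : ℝ => y ^ (p-1) * (1-y) ^ (q-1)) (Ioo (0:ℝ) (1/2)) :=
    (real_beta_integrableOn hp hq).mono_set (fun y hy =>
      ⟨hy.1, by have := hy.2; linarith⟩)
  have hIco : IntegrableOn (fun y : ℝ => y ^ (p-1) * (1-y) ^ (q-1)) (Ico (1/2:ℝ) 1) :=
    (real_beta_integrableOn hp hq).mono_set (fun y hy =>
      ⟨by have := hy.1; linarith, hy.2.le⟩)
  have hdisj : Disjoint (Ioo (0:ℝ) (1/2)) (Ico (1/2:ℝ) 1) := by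
    rw [Set.disjoint_left]
    rintro y ⟨_, h1⟩ ⟨h2', _⟩
    linarith
  have := setIntegral_union (μ := volume) (f := fun y : ℝ => y ^ (p-1) * (1-y) ^ (q-1))
    hdisj measurableSet_Ico hIoo hIco
  rw [Set.Ioo_union_Ico_eq_Ioo (by norm_num) (by norm_num),
    integral_Ico_eq_integral_Ioo] at this
  rw [← real_beta_eq hp hq, this]

lemma integral_cosh_kernel {ν s : ℝ} (hνs : |ν| < s) :
    ∫ t in Ioi (0:ℝ), Real.cosh (ν * t) * (1 / Real.cosh t) ^ s
      = 2 ^ (s-2) * Real.Gamma ((s+ν)/2) * Real.Gamma ((s-ν)/2) / Real.Gamma s := by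
  obtain ⟨hν1, hν2⟩ := abs_lt.mp hνs
  have hs0 : 0 < s := (abs_nonneg ν).trans_lt hνs
  set p := (s - ν)/2 with hp_def
  set q := (s + ν)/2 with hq_def
  have hp : 0 < p := by rw [hp_def]; linarith
  have hq : 0 < q := by rw [hq_def]; linarith
  have hpq : q + p = s := by rw [hp_def, hq_def]; ring
  have himg : (fun x : ℝ => -(1/2) * Real.log x) '' Ioo (0:ℝ) 1 = Ioi (0:ℝ) := by
    ext t
    simp only [mem_image, mem_Ioo, mem_Ioi]
    constructor
    · rintro ⟨x, ⟨hx0, hx1⟩, rfl⟩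
      have : Real.log x < 0 := Real.log_neg hx0 hx1
      linarith
    · intro ht
      refine ⟨Real.exp (-(2*t)), ⟨Real.exp_pos _, ?_⟩, ?_⟩
      · exact Real.exp_lt_one_iff.mpr (by linarith)
      · rw [Real.log_exp]; ring
  have hderiv : ∀ x ∈ Ioo (0:ℝ) 1, HasDerivWithinAt (fun x : ℝ => -(1/2) * Real.log x)
      (-(1/2) * x⁻¹) (Ioo (0:ℝ) 1) x := fun x hx =>
    ((Real.hasDerivAt_log hx.1.ne').const_mul (-(1/2))).hasDerivWithinAt
  have hinj : InjOn (fun x : ℝ => -(1/2) * Real.log x) (Ioo (0:ℝ) 1) := by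
    intro a ha b hb h
    have h' : Real.log a = Real.log b :=
      mul_left_cancel₀ (by norm_num : (-(1/2):ℝ) ≠ 0) h
    exact Real.log_injOn_pos (mem_Ioi.mpr ha.1) (mem_Ioi.mpr hb.1) h'
  rw [← himg, integral_image_eq_integral_abs_deriv_smul measurableSet_Ioo hderiv hinj]
  have hcongr : ∫ x in Ioo (0:ℝ) 1, |(-(1/2) * x⁻¹)| •
        (Real.cosh (ν * (-(1/2) * Real.log x)) * (1 / Real.cosh (-(1/2) * Real.log x)) ^ s)
      = ∫ x in Ioo (0:ℝ) 1,
        2 ^ (s-2) * (x ^ (q-1) * (1+x) ^ (-(q+p)) + x ^ (p-1) * (1+x) ^ (-(p+q))) := by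
    refine setIntegral_congr_fun measurableSet_Ioo fun x hx => ?_
    obtain ⟨hx0, hx1⟩ := hx
    have hxne : x ≠ 0 := hx0.ne'
    have h1x : (0:ℝ) < 1 + x := by linarith
    have hu : 0 < x ^ (1/2:ℝ) := Real.rpow_pos_of_pos hx0 _
    have huu : x ^ (1/2:ℝ) * x ^ (1/2:ℝ) = x := by
      rw [← Real.rpow_add hx0]; norm_num
    have hv : 0 < x ^ (ν/2:ℝ) := Real.rpow_pos_of_pos hx0 _
    have hexp : ∀ c : ℝ, Real.exp (c * Real.log x) = x ^ c := fun c => by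
      rw [Real.rpow_def_of_pos hx0, mul_comm]
    have hch : Real.cosh (-(1/2) * Real.log x) = ((x ^ (1/2:ℝ))⁻¹ + x ^ (1/2:ℝ)) / 2 := by
      rw [Real.cosh_eq, show (-(1/2) * Real.log x) = (-(1/2):ℝ) * Real.log x by ring,
        show -((-(1/2):ℝ) * Real.log x) = (1/2:ℝ) * Real.log x by ring, hexp, hexp,
        Real.rpow_neg hx0.le]
    have hchν : Real.cosh (ν * (-(1/2) * Real.log x)) = ((x ^ (ν/2:ℝ))⁻¹ + x ^ (ν/2:ℝ)) / 2 := by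
      rw [Real.cosh_eq, show (ν * (-(1/2) * Real.log x)) = (-(ν/2):ℝ) * Real.log x by ring,
        show -((-(ν/2):ℝ) * Real.log x) = (ν/2:ℝ) * Real.log x by ring, hexp, hexp,
        Real.rpow_neg hx0.le]
    have hinv : (1 / Real.cosh (-(1/2) * Real.log x)) = 2 * x ^ (1/2:ℝ) / (1+x) := by
      have hune : x ^ (1/2:ℝ) ≠ 0 := ne_of_gt hu
      have key : (x ^ (1/2:ℝ))⁻¹ + x ^ (1/2:ℝ) = (1+x) / x ^ (1/2:ℝ) := by
        rw [eq_div_iff hune, add_mul, inv_mul_cancel₀ hune, huu]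
      rw [hch, key, div_div, one_div_div]
      ring
    have hpow : (2 * x ^ (1/2:ℝ) / (1+x)) ^ s
        = 2 ^ s * x ^ ((1/2)*s) * ((1+x) ^ s)⁻¹ := by
      rw [Real.div_rpow (by positivity) h1x.le,
        Real.mul_rpow (by norm_num) hu.le, ← Real.rpow_mul hx0.le, div_eq_mul_inv]
    have habs : |(-(1/2) * x⁻¹)| = (2*x)⁻¹ := by
      rw [abs_mul, abs_inv, _root_.abs_of_pos hx0, mul_inv]
      norm_num
    have hq1 : x ^ (q-1) = x ^ ((1/2)*s) * x ^ (ν/2:ℝ) * x⁻¹ := by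
      rw [show q - 1 = (1/2)*s + ν/2 + (-1) by rw [hq_def]; ring,
        Real.rpow_add hx0, Real.rpow_add hx0, Real.rpow_neg_one]
    have hp1 : x ^ (p-1) = x ^ ((1/2)*s) * (x ^ (ν/2:ℝ))⁻¹ * x⁻¹ := by
      rw [show p - 1 = (1/2)*s + (-(ν/2)) + (-1) by rw [hp_def]; ring,
        Real.rpow_add hx0, Real.rpow_add hx0, Real.rpow_neg_one, Real.rpow_neg hx0.le]
    have hs2 : (2:ℝ) ^ (s-2) = 2 ^ s / 4 := by
      rw [Real.rpow_sub two_pos]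
      norm_num
    have hnegs : (1+x) ^ (-(q+p)) = ((1+x) ^ s)⁻¹ := by
      rw [hpq, Real.rpow_neg h1x.le]
    have hnegs' : (1+x) ^ (-(p+q)) = ((1+x) ^ s)⁻¹ := by
      rw [add_comm p q]; exact hnegs
    rw [smul_eq_mul, habs, hchν, hinv, hpow, hq1, hp1, hs2, hnegs, hnegs']
    have hxx : (0:ℝ) < (1+x) ^ s := Real.rpow_pos_of_pos h1x _
    field_simp
    ring
  rw [hcongr, integral_const_mul,
    integral_add ((integrableOn_rpow_one_add_rpow hq (by linarith : (0:ℝ) ≤ q + p)).congr_fun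
        (fun x _ => rfl) measurableSet_Ioo)
      ((integrableOn_rpow_one_add_rpow hp (by linarith : (0:ℝ) ≤ p + q)).congr_fun
        (fun x _ => rfl) measurableSet_Ioo),
    sub_frac q p, sub_frac p q, beta_halves hq hp, hpq]
  ring

lemma cosh_le_exp_abs (y : ℝ) : Real.cosh y ≤ Real.exp |y| := by
  rw [← Real.cosh_abs, Real.cosh_eq]
  have h1 : Real.exp (-|y|) ≤ Real.exp |y| :=
    Real.exp_le_exp.mpr (by simp [neg_le_self_iff, abs_nonneg])
  linarith

lemma integrableOn_cosh_kernel {ν s : ℝ} (hνs : |ν| < s) :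
    IntegrableOn (fun t : ℝ => Real.cosh (ν * t) * (1 / Real.cosh t) ^ s) (Ioi 0) := by
  have hs0 : 0 < s := (abs_nonneg ν).trans_lt hνs
  have hcont : Continuous fun t : ℝ => Real.cosh (ν * t) * (1 / Real.cosh t) ^ s := by
    refine (Real.continuous_cosh.comp (continuous_const.mul continuous_id)).mul ?_
    refine Continuous.rpow_const ?_ fun t => Or.inl ?_
    · exact continuous_const.div Real.continuous_cosh fun t => (Real.cosh_pos (x := t)).ne'
    · exact (one_div_pos.mpr (Real.cosh_pos t)).ne'
  have hmaj : IntegrableOn (fun t : ℝ => 2 ^ s * Real.exp (-(s - |ν|) * t)) (Ioi 0) :=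
    (exp_neg_integrableOn_Ioi 0 (by linarith)).const_mul _
  refine hmaj.mono' hcont.aestronglyMeasurable.restrict ?_
  rw [ae_restrict_iff' measurableSet_Ioi]
  refine Filter.Eventually.of_forall fun t ht => ?_
  have ht0 : (0:ℝ) ≤ t := (le_of_lt ht)
  have hch : 0 < Real.cosh t := Real.cosh_pos t
  have h1 : Real.cosh (ν * t) ≤ Real.exp (|ν| * t) := by
    calc Real.cosh (ν * t) ≤ Real.exp |ν * t| := cosh_le_exp_abs _
      _ = Real.exp (|ν| * t) := by rw [abs_mul, _root_.abs_of_nonneg ht0]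
  have h2 : (1 / Real.cosh t) ≤ 2 * Real.exp (-t) := by
    rw [div_le_iff₀ hch]
    have : 2 * Real.exp (-t) * Real.cosh t = 1 + Real.exp (-(2*t)) := by
      rw [Real.cosh_eq]
      rw [show -(2*t) = -t + -t by ring, Real.exp_add, show (1:ℝ) = Real.exp (-t + t) by
        rw [neg_add_cancel, Real.exp_zero]]
      rw [Real.exp_add]
      ring
    rw [this]
    linarith [Real.exp_pos (-(2*t))]
  have h3 : (1 / Real.cosh t) ^ s ≤ (2 * Real.exp (-t)) ^ s :=
    Real.rpow_le_rpow (by positivity) h2 hs0.le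
  have h4 : (2 * Real.exp (-t)) ^ s = 2 ^ s * Real.exp (-t * s) := by
    rw [Real.mul_rpow (by norm_num) (Real.exp_pos _).le, Real.exp_mul]
  have hpos : 0 ≤ Real.cosh (ν * t) * (1 / Real.cosh t) ^ s := by positivity
  rw [Real.norm_eq_abs, _root_.abs_of_nonneg hpos]
  calc Real.cosh (ν * t) * (1 / Real.cosh t) ^ s
      ≤ Real.exp (|ν| * t) * (2 ^ s * Real.exp (-t * s)) := by
        refine mul_le_mul h1 (h3.trans_eq h4) (by positivity) (by positivity)
    _ = 2 ^ s * Real.exp (-(s - |ν|) * t) := by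
        rw [show Real.exp (|ν| * t) * (2 ^ s * Real.exp (-t * s))
            = 2 ^ s * (Real.exp (|ν| * t) * Real.exp (-t * s)) by ring,
          ← Real.exp_add, show |ν| * t + -t * s = -(s - |ν|) * t by ring]

lemma besselK_mellin {ν s : ℝ} (hνs : |ν| < s) :
    ∫ x in Ioi (0:ℝ), x ^ (s-1) * besselK ν x
      = 2 ^ (s-2) * Real.Gamma ((s+ν)/2) * Real.Gamma ((s-ν)/2) := by
  have hs0 : 0 < s := (abs_nonneg ν).trans_lt hνs
  set μ := volume.restrict (Ioi (0:ℝ)) with hμ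
  set F : ℝ → ℝ → ℝ :=
    fun t x => x ^ (s-1) * (Real.exp (-x * Real.cosh t) * Real.cosh (ν * t)) with hF
  have hmeas : AEStronglyMeasurable (Function.uncurry F) (μ.prod μ) := by
    apply Measurable.aestronglyMeasurable
    fun_prop
  have hint_x : ∀ t : ℝ, Integrable (F t) μ := by
    intro t
    have hc : (0:ℝ) < Real.cosh t := Real.cosh_pos t
    have base : IntegrableOn (fun x : ℝ => x ^ (s-1) * Real.exp (-Real.cosh t * x)) (Ioi 0) := by
      have h := integrableOn_rpow_mul_exp_neg_mul_rpow (p := 1)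
        (b := Real.cosh t) (show (-1:ℝ) < s - 1 by linarith) one_pos hc
      refine h.congr_fun (fun x hx => ?_) measurableSet_Ioi
      norm_num
    have h2 : IntegrableOn
        (fun x : ℝ => x ^ (s-1) * Real.exp (-Real.cosh t * x) * Real.cosh (ν * t))
        (Ioi 0) volume := base.mul_const _
    exact h2.congr_fun (fun x hx => by
      simp only [hF]
      rw [show -Real.cosh t * x = -x * Real.cosh t by ring, mul_assoc]) measurableSet_Ioi
  have hval_x : ∀ t : ℝ, ∫ x, F t x ∂μ
      = Real.Gamma s * (Real.cosh (ν * t) * (1 / Real.cosh t) ^ s) := by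
    intro t
    have hc : (0:ℝ) < Real.cosh t := Real.cosh_pos t
    have e : ∫ x, F t x ∂μ
        = (∫ x in Ioi (0:ℝ), x ^ (s-1) * Real.exp (-(Real.cosh t * x))) * Real.cosh (ν * t) := by
      rw [hμ, ← integral_mul_const]
      refine setIntegral_congr_fun measurableSet_Ioi fun x hx => ?_
      simp only [hF]
      rw [show -(Real.cosh t * x) = -x * Real.cosh t by ring]
      ring
    rw [e, integral_rpow_mul_exp_neg_mul_Ioi hs0 hc]
    ring
  have hprod : Integrable (Function.uncurry F) (μ.prod μ) := by
    rw [integrable_prod_iff hmeas]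
    refine ⟨Filter.Eventually.of_forall hint_x, ?_⟩
    have hψ : Integrable (fun t : ℝ =>
        Real.Gamma s * (Real.cosh (ν * t) * (1 / Real.cosh t) ^ s)) μ :=
      (integrableOn_cosh_kernel hνs).const_mul _
    refine hψ.congr ?_
    rw [Filter.EventuallyEq, hμ, ae_restrict_iff' measurableSet_Ioi]
    refine Filter.Eventually.of_forall fun t ht => ?_
    have hnorm : ∫ y, ‖Function.uncurry F (t, y)‖ ∂μ = ∫ x, F t x ∂μ := by
      refine integral_congr_ae ?_
      rw [hμ, Filter.EventuallyEq, ae_restrict_iff' measurableSet_Ioi]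
      refine Filter.Eventually.of_forall fun x hx => ?_
      have hxpos : (0:ℝ) < x := hx
      have hFnn : 0 ≤ F t x := by
        simp only [hF]
        have h1 := Real.cosh_pos (ν * t)
        have h2 := Real.exp_pos (-x * Real.cosh t)
        positivity
      show ‖F t x‖ = F t x
      rw [Real.norm_eq_abs, _root_.abs_of_nonneg hFnn]
    exact (hnorm.trans (hval_x t)).symm
  have swap := integral_integral_swap hprod
  have lhs_eq : ∫ x in Ioi (0:ℝ), x ^ (s-1) * besselK ν x = ∫ x, ∫ t, F t x ∂μ ∂μ := by
    refine setIntegral_congr_fun measurableSet_Ioi fun x hx => ?_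
    rw [show besselK ν x
        = ∫ t in Ioi (0:ℝ), Real.exp (-x * Real.cosh t) * Real.cosh (ν * t) from rfl,
      hμ, ← integral_const_mul]
  rw [lhs_eq, ← swap]
  have : ∫ t, ∫ x, F t x ∂μ ∂μ
      = Real.Gamma s * ∫ t, Real.cosh (ν * t) * (1 / Real.cosh t) ^ s ∂μ := by
    rw [← integral_const_mul]
    exact integral_congr_ae (Filter.Eventually.of_forall fun t => hval_x t)
  rw [this, hμ, integral_cosh_kernel hνs]
  have hΓ : Real.Gamma s ≠ 0 := (Real.Gamma_pos_of_pos hs0).ne'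
  field_simp

/-- The weight `ρ₁` of the first coupled SUSY Segal-Bargmann space. -/
noncomputable def rho1 (n : ℕ) (z : ℂ) : ℝ :=
  (2 / ((2 * n : ℝ) ^ ((1 : ℝ) / (2 * n)) * Real.pi * Real.Gamma (1 / (2 * n)))) *
    (Complex.normSq z) ^ ((n : ℝ) - 1 / 2) *
    besselK (1 - 1 / (2 * n)) ((Complex.normSq z) ^ (n : ℕ) / n)

/-- Norms of the monomials `z^{2nk}` in the first coupled SUSY Segal-Bargmann space:
`∫_ℂ |z^{2nk}|² ρ₁(z,z̄) dA(z) = (2n)^{2k} Γ(k + 1/(2n)) k! / Γ(1/(2n))`. -/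
theorem stmt15 (n : ℕ) (hn : 1 ≤ n) (k : ℕ) :
    ∫ z : ℂ, ‖z ^ (2 * n * k)‖ ^ 2 * rho1 n z
      = (2 * n : ℝ) ^ (2 * k) * Real.Gamma ((k : ℝ) + 1 / (2 * n)) * (k.factorial : ℝ)
          / Real.Gamma (1 / (2 * n)) := by
  have hn0 : (0:ℝ) < (n:ℝ) := by exact_mod_cast hn
  have h2n : (0:ℝ) < 2 * (n:ℝ) := by linarith
  have hrec : (0:ℝ) < 1 / (2 * (n:ℝ)) := by positivity
  have hn1 : (1:ℝ) ≤ (n:ℝ) := by exact_mod_cast hn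
  have hrec1 : 1 / (2 * (n:ℝ)) ≤ 1 / 2 := by
    rw [div_le_div_iff₀ h2n (by norm_num)]
    linarith
  set ν : ℝ := 1 - 1 / (2 * (n:ℝ)) with hν
  set C : ℝ := 2 / ((2 * (n:ℝ)) ^ ((1 : ℝ) / (2 * (n:ℝ))) * Real.pi
      * Real.Gamma (1 / (2 * (n:ℝ)))) with hC
  set σ : ℝ := 2 * (k:ℝ) + 1 / (2 * (n:ℝ)) with hσ
  set G : ℝ → ℝ := fun r =>
    (r ^ (2 * n * k)) ^ 2 * (C * (r ^ 2) ^ ((n : ℝ) - 1 / 2)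
      * besselK ν ((r ^ 2) ^ (n : ℕ) / (n:ℝ))) with hG
  have hGz : ∀ z : ℂ, ‖z ^ (2 * n * k)‖ ^ 2 * rho1 n z = G ‖z‖ := by
    intro z
    rw [hG]
    simp only [rho1, map_pow, norm_pow, Complex.normSq_eq_norm_sq]
    rfl
  have hpolar : ∫ z : ℂ, ‖z ^ (2 * n * k)‖ ^ 2 * rho1 n z
      = 2 * Real.pi * ∫ r in Ioi (0:ℝ), r * G r := by
    rw [show (∫ z : ℂ, ‖z ^ (2 * n * k)‖ ^ 2 * rho1 n z) = ∫ z : ℂ, G ‖z‖ from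
      integral_congr_ae (Filter.Eventually.of_forall hGz)]
    rw [MeasureTheory.integral_fun_norm_addHaar (volume : Measure ℂ) G]
    simp only [Complex.finrank_real_complex, Complex.volume_ball, smul_eq_mul, nsmul_eq_mul]
    rw [show (volume.real (Metric.ball (0:ℂ) 1)) = Real.pi by
      simp [Measure.real, Complex.volume_ball, ENNReal.ofReal_one, one_pow]]
    rw [← integral_const_mul]
    rw [show ((2:ℕ):ℝ) = (2:ℝ) from by norm_num]
    rw [mul_assoc]
    congr 1
    rw [← integral_const_mul]
    refine setIntegral_congr_fun measurableSet_Ioi fun r hr => ?_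
    norm_num
  set gg : ℝ → ℝ := fun y => (C / (2 * (n:ℝ))) * (y ^ σ * besselK ν (y / (n:ℝ))) with hgg
  have hkey : ∀ r ∈ Ioi (0:ℝ), r * G r
      = (|2 * (n:ℝ)| * r ^ (2 * (n:ℝ) - 1)) • gg (r ^ (2 * (n:ℝ))) := by
    intro r hr
    have hr0 : (0:ℝ) < r := hr
    have hRn : r ^ (2 * (n:ℝ)) = r ^ (2 * n : ℕ) := by
      rw [← Real.rpow_natCast r (2 * n)]
      norm_num
    have hrsq : (r ^ 2) ^ (n : ℕ) = r ^ (2 * n : ℕ) := by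
      rw [← pow_mul]
    have habs2n : |2 * (n:ℝ)| = 2 * (n:ℝ) := _root_.abs_of_pos h2n
    have hpw1 : (r ^ 2) ^ ((n : ℝ) - 1 / 2) = r ^ (2 * (n:ℝ) - 1) := by
      rw [← Real.rpow_natCast r 2, ← Real.rpow_mul hr0.le]
      norm_num
      ring_nf
    have hpw2 : (r ^ (2 * (n:ℝ))) ^ σ = r ^ (2 * (n:ℝ) * σ) := by
      rw [← Real.rpow_mul hr0.le]
    have hpw3 : (r ^ (2 * n * k)) ^ 2 = r ^ ((2 * n * k * 2 : ℕ)) := by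
      rw [← pow_mul]
    rw [smul_eq_mul, hgg]
    simp only [hG]
    rw [habs2n, hpw1, hrsq, ← hRn, hpw2,
      show 2 * (n:ℝ) * σ = ((4*n*k+1 : ℕ):ℝ) by
        rw [hσ]; push_cast; field_simp; ring,
      Real.rpow_natCast]
    field_simp
    ring
  have hsub1 : ∫ r in Ioi (0:ℝ), r * G r = ∫ y in Ioi (0:ℝ), gg y := by
    rw [← integral_comp_rpow_Ioi gg (p := 2 * (n:ℝ)) h2n.ne']
    exact setIntegral_congr_fun measurableSet_Ioi hkey
  have hsub2 : ∫ y in Ioi (0:ℝ), gg y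
      = (C / (2 * (n:ℝ))) * ∫ y in Ioi (0:ℝ), y ^ σ * besselK ν (y / (n:ℝ)) := by
    rw [hgg, integral_const_mul]
  have hsub3 : ∫ y in Ioi (0:ℝ), y ^ σ * besselK ν (y / (n:ℝ))
      = (n:ℝ) * ∫ x in Ioi (0:ℝ), ((n:ℝ) * x) ^ σ * besselK ν x := by
    have h := integral_comp_mul_left_Ioi
      (fun y => y ^ σ * besselK ν (y / (n:ℝ))) 0 hn0
    simp only [mul_zero, smul_eq_mul] at h
    have h' : ∫ x in Ioi (0:ℝ), ((n:ℝ) * x) ^ σ * besselK ν (((n:ℝ) * x) / (n:ℝ))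
        = (n:ℝ)⁻¹ * ∫ y in Ioi (0:ℝ), y ^ σ * besselK ν (y / (n:ℝ)) := h
    rw [show (∫ x in Ioi (0:ℝ), ((n:ℝ) * x) ^ σ * besselK ν x)
        = ∫ x in Ioi (0:ℝ), ((n:ℝ) * x) ^ σ * besselK ν (((n:ℝ) * x) / (n:ℝ)) from
      setIntegral_congr_fun measurableSet_Ioi fun x hx => by
        rw [mul_div_cancel_left₀ _ hn0.ne']]
    rw [h']
    field_simp
  have hsub4 : ∫ x in Ioi (0:ℝ), ((n:ℝ) * x) ^ σ * besselK ν x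
      = (n:ℝ) ^ σ * ∫ x in Ioi (0:ℝ), x ^ σ * besselK ν x := by
    rw [← integral_const_mul]
    refine setIntegral_congr_fun measurableSet_Ioi fun x hx => ?_
    rw [Real.mul_rpow hn0.le (le_of_lt hx)]
    ring
  have hνs : |ν| < σ + 1 := by
    rw [hν, _root_.abs_of_nonneg (by linarith : (0:ℝ) ≤ 1 - 1 / (2 * (n:ℝ))), hσ]
    have : (0:ℝ) ≤ 2 * (k:ℝ) := by positivity
    linarith
  have hmellin : ∫ x in Ioi (0:ℝ), x ^ σ * besselK ν x
      = 2 ^ (σ - 1) * Real.Gamma ((k:ℝ) + 1) * Real.Gamma ((k:ℝ) + 1 / (2 * (n:ℝ))) := by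
    have hM := besselK_mellin (ν := ν) (s := σ + 1) hνs
    rw [show σ + 1 - 1 = σ by ring, show σ + 1 - 2 = σ - 1 by ring,
      show (σ + 1 + ν) / 2 = (k:ℝ) + 1 by rw [hσ, hν]; ring,
      show (σ + 1 - ν) / 2 = (k:ℝ) + 1 / (2 * (n:ℝ)) by rw [hσ, hν]; ring] at hM
    exact hM
  have hA : (0:ℝ) < (2 * (n:ℝ)) ^ ((1:ℝ) / (2 * (n:ℝ))) := Real.rpow_pos_of_pos h2n _
  have hΓ0 : (0:ℝ) < Real.Gamma (1 / (2 * (n:ℝ))) := Real.Gamma_pos_of_pos hrec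
  have e1 : (n:ℝ) ^ σ = (n:ℝ) ^ (2 * k : ℕ) * (n:ℝ) ^ ((1:ℝ) / (2 * (n:ℝ))) := by
    rw [hσ, Real.rpow_add hn0, one_div]
    congr 1
    rw [show 2 * (k:ℝ) = ((2 * k : ℕ) : ℝ) by push_cast; ring, Real.rpow_natCast]
  have e2 : (2:ℝ) ^ (σ - 1)
      = (2:ℝ) ^ (2 * k : ℕ) * (2:ℝ) ^ ((1:ℝ) / (2 * (n:ℝ))) / 2 := by
    rw [hσ, show 2 * (k:ℝ) + 1 / (2 * (n:ℝ)) - 1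
        = 2 * (k:ℝ) + (1 / (2 * (n:ℝ)) + (-1)) by ring,
      Real.rpow_add two_pos, Real.rpow_add two_pos, Real.rpow_neg_one,
      show 2 * (k:ℝ) = ((2 * k : ℕ) : ℝ) by push_cast; ring, Real.rpow_natCast]
    ring
  have e3 : (2:ℝ) ^ ((1:ℝ) / (2 * (n:ℝ))) * (n:ℝ) ^ ((1:ℝ) / (2 * (n:ℝ)))
      = (2 * (n:ℝ)) ^ ((1:ℝ) / (2 * (n:ℝ))) := (Real.mul_rpow (by norm_num) hn0.le).symm
  have e4 : (2:ℝ) ^ (2 * k : ℕ) * (n:ℝ) ^ (2 * k : ℕ) = (2 * (n:ℝ)) ^ (2 * k : ℕ) :=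
    (mul_pow 2 (n:ℝ) (2*k)).symm
  rw [hpolar, hsub1, hsub2, hsub3, hsub4, hmellin, Real.Gamma_nat_eq_factorial,
    hC, e1, e2, ← e3, ← e4]
  have h2rec : (0:ℝ) < (2:ℝ) ^ ((1:ℝ)/(2*(n:ℝ))) := Real.rpow_pos_of_pos two_pos _
  have hnrec : (0:ℝ) < (n:ℝ) ^ ((1:ℝ)/(2*(n:ℝ))) := Real.rpow_pos_of_pos hn0 _
  have hπ : Real.pi ≠ 0 := Real.pi_ne_zero
  field_simp
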